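/- Let E = 𝔻̄ ∪ {2} ⊂ ℂ and let P_n(z) = (z - a_n) z^{n-1} with a_n = 3·2^{n-1}/(2^{n-1}+1) - 1. Then ‖P_n‖_E = 2^{n-1}·3/(2^{n-1}+1) ≤ 3, and for the Markov factors M_n(E,k) := sup{ ‖P^{(k)}‖_E : deg P ≤ n, ‖P‖_E = 1 } one has the lower bound M_n(E,k) ≥ (n-1)(n-2)⋯(n-k+1) · 2^{-k} · (n + (k/3)(2^n - 1)) for 1 ≤ k ≤ n. -/

import Mathlib

open Polynomial

/-- Sup norm of a polynomial on a set `E ⊂ ℂ`. -/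
noncomputable def supNorm (E : Set ℂ) (P : Polynomial ℂ) : ℝ :=
  sSup {x : ℝ | ∃ z ∈ E, x = ‖P.eval z‖}

/-- Markov factors `M_n(E,k) = sup{ ‖P^{(k)}‖_E : deg P ≤ n, ‖P‖_E = 1 }`. -/
noncomputable def markovFactor (E : Set ℂ) (n k : ℕ) : ℝ :=
  sSup {x : ℝ | ∃ P : Polynomial ℂ, P.natDegree ≤ n ∧ supNorm E P = 1 ∧
    x = supNorm E ((Polynomial.derivative)^[k] P)}

namespace Stmt17

def E : Set ℂ := Metric.closedBall (0 : ℂ) 1 ∪ {2}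

lemma hE_compact : IsCompact E :=
  (isCompact_closedBall _ _).union isCompact_singleton

lemma set_eq (P : ℂ[X]) :
    {x : ℝ | ∃ z ∈ E, x = ‖P.eval z‖} = (fun z => ‖P.eval z‖) '' E := by
  ext x; simp [Set.image, eq_comm]

lemma bdd (P : ℂ[X]) : BddAbove {x : ℝ | ∃ z ∈ E, x = ‖P.eval z‖} := by
  rw [set_eq]
  exact (hE_compact.image (by fun_prop)).bddAbove

lemma eval_le (P : ℂ[X]) {z : ℂ} (hz : z ∈ E) : ‖P.eval z‖ ≤ supNorm E P :=
  le_csSup (bdd P) ⟨z, hz, rfl⟩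

lemma zero_mem : (0 : ℂ) ∈ E := Or.inl (by simp)
lemma two_mem : (2 : ℂ) ∈ E := Or.inr rfl
lemma neg_one_mem : (-1 : ℂ) ∈ E := Or.inl (by simp)

lemma supNorm_nonneg (P : ℂ[X]) : 0 ≤ supNorm E P :=
  le_trans (norm_nonneg _) (eval_le P zero_mem)

lemma supNorm_le (P : ℂ[X]) {B : ℝ} (hB : 0 ≤ B) (h : ∀ z ∈ E, ‖P.eval z‖ ≤ B) :
    supNorm E P ≤ B :=
  Real.sSup_le (by rintro x ⟨z, hz, rfl⟩; exact h z hz) hB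

lemma supNorm_C_mul (c : ℂ) (P : ℂ[X]) : supNorm E (C c * P) = ‖c‖ * supNorm E P := by
  rcases eq_or_ne c 0 with rfl | hc
  · have hset : {x : ℝ | ∃ z ∈ E, x = ‖(C (0:ℂ) * P).eval z‖} = {0} := by
      ext x
      simp only [map_zero, zero_mul, eval_zero, norm_zero, Set.mem_setOf_eq,
        Set.mem_singleton_iff]
      exact ⟨fun ⟨z, _, h⟩ => h, fun h => ⟨0, zero_mem, h⟩⟩
    rw [_root_.supNorm.eq_1, hset, csSup_singleton]
    simp
  · apply le_antisymm
    · apply supNorm_le _ (mul_nonneg (norm_nonneg _) (supNorm_nonneg _))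
      intro z hz
      simp only [eval_mul, eval_C, norm_mul]
      exact mul_le_mul_of_nonneg_left (eval_le P hz) (norm_nonneg c)
    · rw [← mul_le_mul_iff_right₀ (a := ‖c⁻¹‖) (by simpa using hc), ← mul_assoc]
      have : ‖c⁻¹‖ * ‖c‖ = 1 := by rw [← norm_mul, inv_mul_cancel₀ hc, norm_one]
      rw [this, one_mul]
      apply supNorm_le _ (mul_nonneg (norm_nonneg _) (supNorm_nonneg _))
      intro z hz
      calc ‖P.eval z‖ = ‖c⁻¹‖ * ‖(C c * P).eval z‖ := by
            simp only [eval_mul, eval_C, norm_mul, ← mul_assoc, ← norm_mul,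
              inv_mul_cancel₀ hc, norm_one, one_mul]
        _ ≤ ‖c⁻¹‖ * supNorm E (C c * P) :=
            mul_le_mul_of_nonneg_left (eval_le _ hz) (norm_nonneg _)

noncomputable def Mr (n : ℕ) : ℝ := 2 ^ (n - 1) * 3 / (2 ^ (n - 1) + 1)
noncomputable def a (n : ℕ) : ℂ := 3 * 2 ^ (n - 1) / (2 ^ (n - 1) + 1) - 1
noncomputable def P (n : ℕ) : ℂ[X] := (X - C (a n)) * X ^ (n - 1)
noncomputable def Rr (n k : ℕ) : ℝ :=
  (∏ j ∈ Finset.Ico 1 k, ((n : ℝ) - (j : ℝ))) * (2 : ℝ)⁻¹ ^ k *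
    ((n : ℝ) + ((k : ℝ) / 3) * ((2 : ℝ) ^ n - 1))

section main
variable (n : ℕ)

lemma denom_pos : (0:ℝ) < 2 ^ (n - 1) + 1 := by positivity

lemma Mr_pos : 0 < Mr n := by unfold Mr; positivity

lemma Mr_le_three : Mr n ≤ 3 := by
  unfold Mr
  rw [div_le_iff₀ (denom_pos n)]
  nlinarith [pow_pos (by norm_num : (0:ℝ) < 2) (n-1)]

lemma a_eq : a n = ((Mr n - 1 : ℝ) : ℂ) := by
  unfold a Mr; push_cast; ring

lemma a_norm : ‖a n‖ = Mr n - 1 := by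
  rw [a_eq, Complex.norm_real, Real.norm_of_nonneg]
  unfold Mr
  rw [le_sub_iff_add_le, zero_add, le_div_iff₀ (denom_pos n)]
  have h1 : (1:ℝ) ≤ 2 ^ (n-1) := one_le_pow₀ (by norm_num)
  nlinarith

lemma cdenom_ne : ((2:ℂ) ^ (n-1) + 1) ≠ 0 := by
  have : ((2:ℂ) ^ (n-1) + 1) = (((2:ℝ)^(n-1) + 1 : ℝ) : ℂ) := by push_cast; ring
  rw [this]
  exact_mod_cast (denom_pos n).ne'

lemma eval_two : (P n).eval 2 = ((Mr n : ℝ) : ℂ) := by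
  unfold P a Mr
  simp only [eval_mul, eval_sub, eval_X, eval_C, eval_pow]
  push_cast
  field_simp [cdenom_ne n]
  ring

lemma eval_neg_one_norm : ‖(P n).eval (-1)‖ = Mr n := by
  unfold P
  simp only [eval_mul, eval_sub, eval_X, eval_C, eval_pow]
  rw [norm_mul, norm_pow]
  have h1 : (-1 : ℂ) - a n = -(((Mr n : ℝ) : ℂ)) := by rw [a_eq]; push_cast; ring
  rw [h1, norm_neg, Complex.norm_real, Real.norm_of_nonneg (Mr_pos n).le]
  simp

lemma supNorm_P : supNorm E (P n) = Mr n := by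
  apply le_antisymm
  · apply supNorm_le _ (Mr_pos n).le
    intro z hz
    rcases hz with hz | hz
    · simp only [Metric.mem_closedBall, dist_zero_right] at hz
      unfold P
      simp only [eval_mul, eval_sub, eval_X, eval_C, eval_pow]
      rw [norm_mul, norm_pow]
      calc ‖z - a n‖ * ‖z‖ ^ (n-1) ≤ (‖z‖ + ‖a n‖) * 1 := by
            apply mul_le_mul (norm_sub_le _ _) (pow_le_one₀ (norm_nonneg _) hz)
              (by positivity) (by positivity)
        _ ≤ Mr n := by rw [a_norm, mul_one]; linarith
    · rw [Set.mem_singleton_iff] at hz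
      subst hz
      rw [eval_two, Complex.norm_real, Real.norm_of_nonneg (Mr_pos n).le]
  · calc Mr n = ‖(P n).eval (-1)‖ := (eval_neg_one_norm n).symm
      _ ≤ supNorm E (P n) := eval_le _ neg_one_mem

end main

lemma cast_descFactorial {m k : ℕ} (h : k ≤ m + 1) :
    ((m.descFactorial k : ℂ)) = ∏ j ∈ Finset.range k, ((m : ℂ) - j) := by
  induction k with
  | zero => simp
  | succ k ih =>
    have hk : k ≤ m := Nat.lt_succ_iff.mp h
    rw [Nat.descFactorial_succ, Nat.cast_mul, ih (hk.trans (Nat.le_succ m)),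
      Finset.prod_range_succ, Nat.cast_sub hk]
    ring

lemma markov_bdd (n k : ℕ) :
    BddAbove {x : ℝ | ∃ Q : ℂ[X], Q.natDegree ≤ n ∧ supNorm E Q = 1 ∧
      x = supNorm E (derivative^[k] Q)} := by
  classical
  set v : Fin (n + 1) → ℂ := fun j => ((j : ℕ) : ℂ) / ((n : ℂ) + 1) with hv
  have hden : ((n : ℂ) + 1) ≠ 0 := by exact_mod_cast Nat.cast_add_one_ne_zero (R := ℂ) n
  have hv_inj : Set.InjOn v (Finset.univ : Finset (Fin (n + 1))) := by
    intro i _ j _ hij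
    simp only [hv, div_eq_div_iff hden hden] at hij
    have : ((i : ℕ) : ℂ) = ((j : ℕ) : ℂ) := by
      field_simp at hij
      exact_mod_cast hij
    exact Fin.ext (by exact_mod_cast this)
  have hv_mem : ∀ j : Fin (n + 1), v j ∈ E := by
    intro j
    left
    simp only [Metric.mem_closedBall, dist_zero_right, hv, norm_div]
    rw [div_le_one (by rw [show ((n:ℂ)+1) = (((n+1 : ℕ)):ℂ) by push_cast; ring,
      Complex.norm_natCast]; positivity)]
    rw [Complex.norm_natCast, show ((n:ℂ)+1) = (((n+1 : ℕ)):ℂ) by push_cast; ring,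
      Complex.norm_natCast]
    exact_mod_cast Nat.le_succ_of_le (Fin.is_le j)
  refine ⟨∑ j : Fin (n + 1), supNorm E (derivative^[k] (Lagrange.basis Finset.univ v j)), ?_⟩
  rintro x ⟨Q, hdeg, hsup, rfl⟩
  have hdlt : Q.degree < (Finset.univ : Finset (Fin (n + 1))).card := by
    rw [Finset.card_univ, Fintype.card_fin]
    exact lt_of_le_of_lt degree_le_natDegree (by exact_mod_cast Nat.lt_succ_of_le hdeg)
  have hQ : Q = Lagrange.interpolate Finset.univ v (fun j => Q.eval (v j)) :=
    Lagrange.eq_interpolate hv_inj hdlt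
  apply supNorm_le _ (Finset.sum_nonneg fun j _ => supNorm_nonneg _)
  intro z hz
  conv_lhs => rw [hQ]
  rw [Lagrange.interpolate_apply, iterate_derivative_sum, eval_finset_sum]
  refine (norm_sum_le _ _).trans (Finset.sum_le_sum fun j _ => ?_)
  rw [iterate_derivative_C_mul, eval_mul, eval_C, norm_mul]
  calc ‖Q.eval (v j)‖ * ‖(derivative^[k] (Lagrange.basis Finset.univ v j)).eval z‖
      ≤ 1 * supNorm E (derivative^[k] (Lagrange.basis Finset.univ v j)) := by
        apply mul_le_mul _ (eval_le _ hz) (norm_nonneg _) zero_le_one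
        rw [← hsup]; exact eval_le _ (hv_mem j)
    _ = _ := one_mul _

lemma P_expand (n : ℕ) (hn : 1 ≤ n) : P n = X ^ n - C (a n) * X ^ (n - 1) := by
  unfold P
  rw [sub_mul, ← pow_succ', Nat.sub_add_cancel hn]

lemma key (n k : ℕ) (hn : 1 ≤ n) (hk1 : 1 ≤ k) (hkn : k ≤ n) :
    (derivative^[k] (P n)).eval 2 = ((Mr n * Rr n k : ℝ) : ℂ) := by
  rw [P_expand n hn, iterate_derivative_sub, iterate_derivative_C_mul,
    iterate_derivative_X_pow_eq_natCast_mul, iterate_derivative_X_pow_eq_natCast_mul]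
  simp only [eval_sub, eval_mul, eval_pow, eval_natCast, eval_C, eval_X]
  have hA : ((n.descFactorial k : ℂ)) = (n : ℂ) * ∏ j ∈ Finset.Ico 1 k, ((n : ℂ) - j) := by
    rw [cast_descFactorial (hkn.trans (Nat.le_succ n)), Finset.range_eq_Ico,
      Finset.prod_eq_prod_Ico_succ_bot hk1]
    simp
  have hB : (((n - 1).descFactorial k : ℂ)) =
      (∏ j ∈ Finset.Ico 1 k, ((n : ℂ) - j)) * ((n : ℂ) - k) := by
    rw [cast_descFactorial (by omega : k ≤ (n - 1) + 1)]
    have hc : ∀ j ∈ Finset.range k, (((n - 1 : ℕ) : ℂ) - (j:ℕ)) = ((n : ℂ) - (1 + (j:ℕ))) := by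
      intro j _
      rw [Nat.cast_sub hn]
      push_cast; ring
    have h1 : ∏ j ∈ Finset.Ico 1 (k+1), ((n:ℂ) - j) = ∏ x ∈ Finset.range k, ((n:ℂ) - (1+(x:ℕ))) := by
      rw [Finset.prod_Ico_eq_prod_range, show k+1-1 = k from rfl]
      exact Finset.prod_congr rfl (fun j _ => by push_cast; ring)
    rw [Finset.prod_congr rfl hc, ← h1, Finset.prod_Ico_succ_top hk1]
  rw [hA, hB]
  have hMR : ((Mr n * Rr n k : ℝ) : ℂ) =
      ((2:ℂ) ^ (n-1) * 3 / ((2:ℂ) ^ (n-1) + 1)) *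
        ((∏ j ∈ Finset.Ico 1 k, ((n : ℂ) - j)) * ((2:ℂ)⁻¹) ^ k *
          ((n : ℂ) + ((k : ℂ) / 3) * ((2:ℂ) ^ n - 1))) := by
    unfold Mr Rr
    push_cast
    ring
  rw [hMR]
  have h2 : (2:ℂ) ≠ 0 := two_ne_zero
  have hden : ((2:ℂ) ^ (n-1) + 1) ≠ 0 := by
    have h : ((2:ℂ) ^ (n-1) + 1) = (((2:ℝ) ^ (n-1) + 1 : ℝ) : ℂ) := by push_cast; ring
    rw [h]
    exact_mod_cast (by positivity : (0:ℝ) < 2 ^ (n-1) + 1).ne'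
  unfold a
  rcases eq_or_lt_of_le hkn with heq | hlt
  · subst heq
    obtain ⟨m, rfl⟩ : ∃ m, k = m + 1 := ⟨k - 1, by omega⟩
    have e2 : m + 1 - 1 = m := by omega
    have e1 : m + 1 - (m + 1) = 0 := by omega
    have e3 : m - (m + 1) = 0 := by omega
    rw [e2, e1, e3]
    have hden' : ((2:ℂ) ^ m + 1) ≠ 0 := by rwa [e2] at hden
    simp only [inv_pow]
    field_simp
    ring
  · obtain ⟨e, rfl⟩ : ∃ e, n = k + 1 + e := ⟨n - k - 1, by omega⟩
    have e1 : k + 1 + e - k = 1 + e := by omega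
    have e2 : k + 1 + e - 1 = k + e := by omega
    have e3 : k + e - k = e := by omega
    rw [e2, e1, e3]
    have hden' : ((2:ℂ) ^ (k + e) + 1) ≠ 0 := by rwa [e2] at hden
    push_cast
    simp only [inv_pow]
    field_simp
    ring

lemma Rr_nonneg (n k : ℕ) (hkn : k ≤ n) : 0 ≤ Rr n k := by
  unfold Rr
  have hprod : 0 ≤ ∏ j ∈ Finset.Ico 1 k, ((n : ℝ) - (j : ℝ)) := by
    apply Finset.prod_nonneg
    intro j hj
    rw [Finset.mem_Ico] at hj
    have : (j:ℝ) ≤ n := by exact_mod_cast (by omega : j ≤ n)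
    linarith
  have h1 : (1:ℝ) ≤ 2 ^ n := one_le_pow₀ (by norm_num)
  have hlast : (0:ℝ) ≤ (n : ℝ) + ((k : ℝ) / 3) * ((2 : ℝ) ^ n - 1) := by
    have : (0:ℝ) ≤ ((k : ℝ) / 3) * ((2 : ℝ) ^ n - 1) :=
      mul_nonneg (by positivity) (by linarith)
    have hn0 : (0:ℝ) ≤ n := Nat.cast_nonneg n
    linarith
  exact mul_nonneg (mul_nonneg hprod (by positivity)) hlast

end Stmt17

/-- for `E = 𝔻̄ ∪ {2}` and `P_n(z) = (z - a_n) z^{n-1}` with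
`a_n = 3·2^{n-1}/(2^{n-1}+1) - 1`, one has
`‖P_n‖_E = 3·2^{n-1}/(2^{n-1}+1) ≤ 3`, and
`M_n(E,k) ≥ (n-1)(n-2)⋯(n-k+1) · 2^{-k} · (n + (k/3)(2^n - 1))` for `1 ≤ k ≤ n`. -/
theorem stmt17 (n : ℕ) (hn : 1 ≤ n) :
    let E : Set ℂ := Metric.closedBall (0 : ℂ) 1 ∪ {2}
    let a : ℂ := 3 * 2 ^ (n - 1) / (2 ^ (n - 1) + 1) - 1
    let P : Polynomial ℂ := (Polynomial.X - Polynomial.C a) * Polynomial.X ^ (n - 1)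
    supNorm E P = 2 ^ (n - 1) * 3 / (2 ^ (n - 1) + 1) ∧
    supNorm E P ≤ 3 ∧
    ∀ k : ℕ, 1 ≤ k → k ≤ n →
      (∏ j ∈ Finset.Ico 1 k, ((n : ℝ) - (j : ℝ))) * (2 : ℝ)⁻¹ ^ k *
          ((n : ℝ) + ((k : ℝ) / 3) * ((2 : ℝ) ^ n - 1)) ≤
        markovFactor E n k := by
  intro E a P
  refine ⟨Stmt17.supNorm_P n, ?_, ?_⟩
  · calc supNorm E P = Stmt17.Mr n := Stmt17.supNorm_P n
      _ ≤ 3 := Stmt17.Mr_le_three n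
  · intro k hk1 hkn
    set c : ℂ := (((Stmt17.Mr n)⁻¹ : ℝ) : ℂ) with hc
    set Q : Polynomial ℂ := Polynomial.C c * Stmt17.P n with hQ
    have hQdeg : Q.natDegree ≤ n := by
      rw [hQ]
      refine le_trans (Polynomial.natDegree_mul_le) ?_
      rw [Polynomial.natDegree_C, zero_add]
      unfold Stmt17.P
      refine le_trans (Polynomial.natDegree_mul_le) ?_
      have h1 : (Polynomial.X - Polynomial.C (Stmt17.a n)).natDegree ≤ 1 :=
        le_of_eq (Polynomial.natDegree_X_sub_C _)
      have h2 : ((Polynomial.X : Polynomial ℂ) ^ (n-1)).natDegree = n - 1 :=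
        Polynomial.natDegree_X_pow _
      omega
    have hQsup : supNorm Stmt17.E Q = 1 := by
      rw [hQ, Stmt17.supNorm_C_mul, Stmt17.supNorm_P, hc, Complex.norm_real,
        Real.norm_of_nonneg (inv_nonneg.mpr (Stmt17.Mr_pos n).le),
        inv_mul_cancel₀ (Stmt17.Mr_pos n).ne']
    have hval : ‖(Polynomial.derivative^[k] Q).eval 2‖ = Stmt17.Rr n k := by
      rw [hQ, Polynomial.iterate_derivative_C_mul, Polynomial.eval_mul, Polynomial.eval_C,
        norm_mul, Stmt17.key n k hn hk1 hkn, hc, Complex.norm_real, Complex.norm_real,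
        Real.norm_of_nonneg (inv_nonneg.mpr (Stmt17.Mr_pos n).le),
        Real.norm_of_nonneg (mul_nonneg (Stmt17.Mr_pos n).le (Stmt17.Rr_nonneg n k hkn))]
      rw [inv_mul_eq_div]
      exact mul_div_cancel_left₀ _ (Stmt17.Mr_pos n).ne'
    have hstep : Stmt17.Rr n k ≤ supNorm Stmt17.E (Polynomial.derivative^[k] Q) := by
      rw [← hval]
      exact Stmt17.eval_le _ Stmt17.two_mem
    have hmem : supNorm Stmt17.E (Polynomial.derivative^[k] Q) ∈
        {x : ℝ | ∃ R : Polynomial ℂ, R.natDegree ≤ n ∧ supNorm Stmt17.E R = 1 ∧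
          x = supNorm Stmt17.E (Polynomial.derivative^[k] R)} := ⟨Q, hQdeg, hQsup, rfl⟩
    exact le_trans hstep (le_csSup (Stmt17.markov_bdd n k) hmem)
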